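/- Let $U_1, U_2 \subseteq \mathbb{R}^p$ be linear subspaces, $\theta \in (0,2)$, and $v^0 \in \mathbb{R}^p$. The limit $v^*$ of the governing sequence $(v^k)$ of the relaxed Douglas–Rachford iteration started at $v^0$ satisfies $v^* = P_{U_1 \cap U_2}(v^0) + P_{U_1^\perp \cap U_2^\perp}(v^0)$. -/

import Mathlib

open Filter Topology

noncomputable def proj {p : ℕ} (U : Submodule ℝ (EuclideanSpace ℝ (Fin p)))
    (v : EuclideanSpace ℝ (Fin p)) : EuclideanSpace ℝ (Fin p) :=
  (U.orthogonalProjectionOnto v : EuclideanSpace ℝ (Fin p))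

lemma proj_cont {p : ℕ} (U : Submodule ℝ (EuclideanSpace ℝ (Fin p))) :
    Continuous (proj U) :=
  continuous_subtype_val.comp (U.orthogonalProjectionOnto).continuous

lemma proj_add {p : ℕ} (U : Submodule ℝ (EuclideanSpace ℝ (Fin p))) (x y) :
    proj U (x + y) = proj U x + proj U y := by simp [proj]

lemma proj_sub {p : ℕ} (U : Submodule ℝ (EuclideanSpace ℝ (Fin p))) (x y) :
    proj U (x - y) = proj U x - proj U y := by simp [proj]

lemma proj_smul {p : ℕ} (U : Submodule ℝ (EuclideanSpace ℝ (Fin p))) (c : ℝ) (x) :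
    proj U (c • x) = c • proj U x := by simp [proj]

lemma proj_proj_of_le {p : ℕ} {S U : Submodule ℝ (EuclideanSpace ℝ (Fin p))}
    (h : S ≤ U) (x) : proj S (proj U x) = proj S x := by
  simp only [proj]
  rw [← Submodule.starProjection_apply U x, Submodule.orthogonalProjectionOnto_starProjection_of_le h]

lemma proj_eq_zero_of_mem_orth {p : ℕ} {S : Submodule ℝ (EuclideanSpace ℝ (Fin p))}
    {x} (h : x ∈ Sᗮ) : proj S x = 0 := by
  simp [proj, Submodule.orthogonalProjectionOnto_apply_of_mem_orthogonal h]

theorem stmt1 {p : ℕ} (U₁ U₂ : Submodule ℝ (EuclideanSpace ℝ (Fin p)))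
    (θ : ℝ) (hθ : θ ∈ Set.Ioo (0 : ℝ) 2)
    (v : ℕ → EuclideanSpace ℝ (Fin p))
    (hv : ∀ k, v (k + 1) =
      v k + θ • (proj U₂ ((2 : ℝ) • proj U₁ (v k) - v k) - proj U₁ (v k)))
    (vstar : EuclideanSpace ℝ (Fin p))
    (hlim : Tendsto v atTop (𝓝 vstar)) :
    vstar = proj (U₁ ⊓ U₂) (v 0) + proj (U₁ᗮ ⊓ U₂ᗮ) (v 0) := by
  set S : Submodule ℝ (EuclideanSpace ℝ (Fin p)) := U₁ ⊓ U₂ with hS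
  set S' : Submodule ℝ (EuclideanSpace ℝ (Fin p)) := U₁ᗮ ⊓ U₂ᗮ with hS'
  set F : EuclideanSpace ℝ (Fin p) → EuclideanSpace ℝ (Fin p) :=
    fun x => x + θ • (proj U₂ ((2 : ℝ) • proj U₁ x - x) - proj U₁ x) with hF
  have hFcont : Continuous F := by
    apply continuous_id.add
    apply Continuous.fun_const_smul
    exact ((proj_cont U₂).comp (((proj_cont U₁).fun_const_smul (2 : ℝ)).sub continuous_id)).sub
      (proj_cont U₁)
  -- vstar is a fixed point of F
  have hfix : F vstar = vstar := by
    have h1 : Tendsto (fun k => F (v k)) atTop (𝓝 (F vstar)) :=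
      (hFcont.tendsto vstar).comp hlim
    have h2 : Tendsto (fun k => v (k + 1)) atTop (𝓝 vstar) :=
      hlim.comp (tendsto_add_atTop_nat 1)
    have h3 : (fun k => F (v k)) = fun k => v (k + 1) := by
      funext k; rw [hv k]
    rw [h3] at h1
    exact tendsto_nhds_unique h1 h2
  -- hence proj U₂ (2 • proj U₁ vstar - vstar) = proj U₁ vstar
  have hθ0 : θ ≠ 0 := ne_of_gt hθ.1
  have hkey : proj U₂ ((2 : ℝ) • proj U₁ vstar - vstar) = proj U₁ vstar := by
    have := hfix
    simp only [hF] at this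
    have h4 : θ • (proj U₂ ((2 : ℝ) • proj U₁ vstar - vstar) - proj U₁ vstar) = 0 := by
      have := sub_eq_zero.mpr this.symm
      simpa [add_sub_cancel_left] using this.symm
    have h5 := smul_eq_zero.mp h4
    rcases h5 with h | h
    · exact absurd h hθ0
    · exact sub_eq_zero.mp h
  set a : EuclideanSpace ℝ (Fin p) := proj U₁ vstar with ha
  set b : EuclideanSpace ℝ (Fin p) := vstar - a with hb
  have hvab : vstar = a + b := by simp [hb]
  have hbU₁ : b ∈ U₁ᗮ := Submodule.sub_starProjection_mem_orthogonal vstar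
  have haU₁ : a ∈ U₁ := (U₁.orthogonalProjectionOnto vstar).2
  have h2a : (2 : ℝ) • a - vstar = a - b := by
    rw [hb]; ring_nf; module
  have haU₂ : a ∈ U₂ := by
    rw [← hkey, h2a]; exact (U₂.orthogonalProjectionOnto (a - b)).2
  have hbU₂ : b ∈ U₂ᗮ := by
    have hmem : a - b - (U₂.orthogonalProjectionOnto (a - b) : EuclideanSpace ℝ (Fin p)) ∈ U₂ᗮ := Submodule.sub_starProjection_mem_orthogonal (K := U₂) (a - b)
    have hpab : (U₂.orthogonalProjectionOnto (a - b) : EuclideanSpace ℝ (Fin p)) = a := by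
      rw [← h2a]; exact hkey
    rw [hpab] at hmem
    have h6 : a - b - a = -b := by abel
    rw [h6] at hmem
    simpa using (Submodule.neg_mem _ hmem : -(-b) ∈ U₂ᗮ)
  have haS : a ∈ S := ⟨haU₁, haU₂⟩
  have hbS' : b ∈ S' := ⟨hbU₁, hbU₂⟩
  -- proj S (v k) is constant
  have hSle₁ : S ≤ U₁ := inf_le_left
  have hSle₂ : S ≤ U₂ := inf_le_right
  have hS'le₁ : S' ≤ U₁ᗮ := inf_le_left
  have hS'le₂ : S' ≤ U₂ᗮ := inf_le_right
  have hU₁S' : U₁ ≤ S'ᗮ := le_trans (Submodule.le_orthogonal_orthogonal U₁)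
    (Submodule.orthogonal_le hS'le₁)
  have hU₂S' : U₂ ≤ S'ᗮ := le_trans (Submodule.le_orthogonal_orthogonal U₂)
    (Submodule.orthogonal_le hS'le₂)
  have hconstS : ∀ k, proj S (v k) = proj S (v 0) := by
    intro k
    induction k with
    | zero => rfl
    | succ n ih =>
      rw [hv n, proj_add, proj_smul, proj_sub, proj_proj_of_le hSle₂, proj_sub,
        proj_smul, proj_proj_of_le hSle₁]
      rw [← ih]; module
  have hconstS' : ∀ k, proj S' (v k) = proj S' (v 0) := by
    intro k
    induction k with
    | zero => rfl
    | succ n ih =>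
      have hz₁ : proj S' (proj U₁ (v n)) = 0 :=
        proj_eq_zero_of_mem_orth (hU₁S' (U₁.orthogonalProjectionOnto (v n)).2)
      have hz₂ : proj S' (proj U₂ ((2 : ℝ) • proj U₁ (v n) - v n)) = 0 :=
        proj_eq_zero_of_mem_orth (hU₂S' (U₂.orthogonalProjectionOnto _).2)
      rw [hv n, proj_add, proj_smul, proj_sub, hz₁, hz₂, ← ih]
      simp
  -- pass to the limit
  have hlimS : proj S vstar = proj S (v 0) := by
    have h1 : Tendsto (fun k => proj S (v k)) atTop (𝓝 (proj S vstar)) :=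
      ((proj_cont S).tendsto vstar).comp hlim
    have h2 : (fun k => proj S (v k)) = fun _ => proj S (v 0) := funext hconstS
    rw [h2] at h1
    exact (tendsto_nhds_unique h1 tendsto_const_nhds)
  have hlimS' : proj S' vstar = proj S' (v 0) := by
    have h1 : Tendsto (fun k => proj S' (v k)) atTop (𝓝 (proj S' vstar)) :=
      ((proj_cont S').tendsto vstar).comp hlim
    have h2 : (fun k => proj S' (v k)) = fun _ => proj S' (v 0) := funext hconstS'
    rw [h2] at h1
    exact (tendsto_nhds_unique h1 tendsto_const_nhds)
  -- S ⊥ S'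
  have hbSorth : b ∈ Sᗮ := (Submodule.orthogonal_le hSle₁) hbU₁
  have haS'orth : a ∈ S'ᗮ := hU₁S' haU₁
  have hpSv : proj S vstar = a := by
    rw [hvab, proj_add, proj_eq_zero_of_mem_orth hbSorth,
      show proj S a = a from Submodule.starProjection_eq_self_iff.mpr haS]
    simp
  have hpS'v : proj S' vstar = b := by
    rw [hvab, proj_add, proj_eq_zero_of_mem_orth haS'orth,
      show proj S' b = b from Submodule.starProjection_eq_self_iff.mpr hbS']
    simp
  rw [hvab, ← hpSv, ← hpS'v, hlimS, hlimS']
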